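/- Fix u, v ∈ (0,1) and 0 < s < t. Then the partial derivative of ψ(s,t;u,v) with respect to t exists and equals ∫₀ᵘ φ(h(w)) · ( Φ⁻¹(v)/(2·√(t·(t−s))) − (√t·Φ⁻¹(v) − √s·Φ⁻¹(w))/(2·(t−s)^{3/2}) ) dw, where h(w) = (√t·Φ⁻¹(v) − √s·Φ⁻¹(w))/√(t−s). -/

import Mathlib

open MeasureTheory Set Filter Topology

/-- Density of the standard normal distribution (φ). -/
noncomputable def stdNormalPDF (x : ℝ) : ℝ := (Real.sqrt (2 * Real.pi))⁻¹ * Real.exp (-x ^ 2 / 2)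

/-- Cumulative distribution function of the standard normal distribution (Φ). -/
noncomputable def stdNormalCDF (x : ℝ) : ℝ := ∫ t in Set.Iic x, stdNormalPDF t

/-- The standard normal quantile function (Φ⁻¹), the inverse of Φ on (0,1). -/
noncomputable def stdNormalCDFInv : ℝ → ℝ := Function.invFun stdNormalCDF

/-- The integrand of the Brownian-copula kernel; the `if` branches encode the
conventions Φ⁻¹(0) = -∞ (so Φ(·) = 0) and Φ⁻¹(1) = +∞ (so Φ(·) = 1). -/
noncomputable def psiIntegrand (s t v w : ℝ) : ℝ :=
  if v ≤ 0 then 0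
  else if 1 ≤ v then 1
  else stdNormalCDF ((Real.sqrt (max s t) * stdNormalCDFInv v -
      Real.sqrt (min s t) * stdNormalCDFInv w) / Real.sqrt |t - s|)

/-- The Brownian-copula kernel ψ(s,t;u,v). -/
noncomputable def psi (s t u v : ℝ) : ℝ :=
  if 0 < |t - s| then ∫ w in (0:ℝ)..u, psiIntegrand s t v w
  else if 0 < t then min u v
  else u * v

lemma sqrt2pi_pos : 0 < Real.sqrt (2 * Real.pi) := Real.sqrt_pos.2 (by positivity)

lemma one_le_sqrt2pi : 1 ≤ Real.sqrt (2 * Real.pi) :=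
  Real.one_le_sqrt.2 (by nlinarith [Real.pi_gt_three])

lemma pdf_pos (x : ℝ) : 0 < stdNormalPDF x := by
  unfold stdNormalPDF; positivity

lemma pdf_cont : Continuous stdNormalPDF := by
  unfold stdNormalPDF; continuity

lemma pdf_le_one (x : ℝ) : stdNormalPDF x ≤ 1 := by
  unfold stdNormalPDF
  have h1 : Real.exp (-x ^ 2 / 2) ≤ 1 := Real.exp_le_one_iff.2 (by nlinarith [sq_nonneg x])
  have h2 : (Real.sqrt (2 * Real.pi))⁻¹ ≤ 1 := by
    rw [inv_le_one_iff₀]; right; exact one_le_sqrt2pi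
  exact mul_le_one₀ h2 (Real.exp_pos _).le h1

lemma pdf_mul_le_one (x : ℝ) : |stdNormalPDF x * x| ≤ 1 := by
  unfold stdNormalPDF
  have h3 : |x| ≤ Real.exp (x ^ 2 / 2) := by
    have := Real.add_one_le_exp (x ^ 2 / 2)
    nlinarith [sq_nonneg (|x| - 1), sq_abs x]
  have h2 : (Real.sqrt (2 * Real.pi))⁻¹ ≤ 1 := by
    rw [inv_le_one_iff₀]; right; exact one_le_sqrt2pi
  have hi : 0 ≤ (Real.sqrt (2 * Real.pi))⁻¹ := by positivity
  rw [abs_mul, abs_mul, abs_of_nonneg hi, abs_of_nonneg (Real.exp_pos _).le]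
  have he : Real.exp (-x ^ 2 / 2) * |x| ≤ 1 := by
    rw [neg_div, Real.exp_neg]
    rw [inv_mul_le_one₀ (Real.exp_pos _)] -- maybe wrong name
    exact h3
  nlinarith [abs_nonneg x, Real.exp_pos (-x^2/2)]

lemma pdf_integrable : Integrable stdNormalPDF := by
  have : Integrable (fun x : ℝ => Real.exp (-(1/2 : ℝ) * x ^ 2)) := integrable_exp_neg_mul_sq (by norm_num)
  have h := this.const_mul (Real.sqrt (2 * Real.pi))⁻¹
  refine h.congr (Filter.Eventually.of_forall fun x => ?_)
  unfold stdNormalPDF; ring_nf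

lemma pdf_total : ∫ x, stdNormalPDF x = 1 := by
  unfold stdNormalPDF
  rw [MeasureTheory.integral_const_mul]
  have : ∀ x : ℝ, Real.exp (-x ^ 2 / 2) = Real.exp (-(1/2 : ℝ) * x ^ 2) := fun x => by ring_nf
  simp_rw [this]
  rw [integral_gaussian]
  rw [show (Real.pi / (1/2 : ℝ)) = 2 * Real.pi by ring]
  exact inv_mul_cancel₀ (ne_of_gt sqrt2pi_pos)

lemma cdf_hasDerivAt (x : ℝ) : HasDerivAt stdNormalCDF (stdNormalPDF x) x := by
  have hfun : stdNormalCDF = fun y => stdNormalCDF 0 + ∫ t in (0:ℝ)..y, stdNormalPDF t := by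
    funext y
    rw [intervalIntegral.integral_Iic_sub_Iic pdf_integrable.integrableOn pdf_integrable.integrableOn |>.symm]
    unfold stdNormalCDF; ring
  rw [hfun]
  have h := intervalIntegral.integral_hasDerivAt_right
    (pdf_integrable.intervalIntegrable : IntervalIntegrable _ volume 0 x)
    (pdf_cont.stronglyMeasurableAtFilter _ _) pdf_cont.continuousAt
  exact h.const_add _

lemma cdf_strictMono : StrictMono stdNormalCDF := by
  apply strictMono_of_deriv_pos
  intro x
  rw [(cdf_hasDerivAt x).deriv]
  exact pdf_pos x

lemma cdf_nonneg (x : ℝ) : 0 ≤ stdNormalCDF x :=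
  MeasureTheory.setIntegral_nonneg measurableSet_Iic (fun y _ => (pdf_pos y).le)

lemma cdf_le_one (x : ℝ) : stdNormalCDF x ≤ 1 := by
  rw [← pdf_total]
  exact MeasureTheory.setIntegral_le_integral pdf_integrable
    (Filter.Eventually.of_forall fun y => (pdf_pos y).le)

lemma cdf_tendsto_atTop : Tendsto stdNormalCDF atTop (𝓝 1) := by
  rw [← pdf_total]
  exact (MeasureTheory.aecover_Iic tendsto_id).integral_tendsto_of_countably_generated
    pdf_integrable

lemma cdf_tendsto_atBot : Tendsto stdNormalCDF atBot (𝓝 0) := by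
  have h : Tendsto (fun n : ℕ => stdNormalCDF (-(n:ℝ))) atTop (𝓝 0) := by
    have := tendsto_setIntegral_of_antitone (μ := volume) (f := stdNormalPDF)
      (s := fun n : ℕ => Iic (-(n:ℝ))) (fun n => measurableSet_Iic)
      (fun i j hij => Iic_subset_Iic.2 (by exact_mod_cast neg_le_neg (Nat.cast_le.2 hij)))
      ⟨0, pdf_integrable.integrableOn⟩
    have he : (⋂ n : ℕ, Iic (-(n:ℝ))) = ∅ := by
      ext x; simp only [mem_iInter, mem_Iic, mem_empty_iff_false, iff_false, not_forall, not_le]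
      obtain ⟨n, hn⟩ := exists_nat_gt (-x)
      exact ⟨n, by linarith⟩
    rw [he] at this
    simpa [stdNormalCDF] using this
  -- monotone + subsequence squeeze
  rw [Metric.tendsto_nhds]
  intro ε hε
  rw [Metric.tendsto_nhds] at h
  obtain ⟨N, hN⟩ := (h ε hε).exists
  rw [eventually_atBot]
  refine ⟨-(N:ℝ), fun x hx => ?_⟩
  have h1 : stdNormalCDF x ≤ stdNormalCDF (-(N:ℝ)) := cdf_strictMono.monotone hx
  have h2 := cdf_nonneg x
  have := hN
  simp only [Real.dist_eq, sub_zero] at this ⊢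
  rw [abs_of_nonneg h2]
  rw [abs_of_nonneg (cdf_nonneg _)] at this
  linarith

lemma cdf_surjOn : Ioo (0:ℝ) 1 ⊆ Set.range stdNormalCDF := by
  intro y hy
  obtain ⟨b, hb⟩ := (cdf_tendsto_atTop.eventually (eventually_gt_nhds hy.2)).exists
  obtain ⟨a, ha⟩ := (cdf_tendsto_atBot.eventually (eventually_lt_nhds hy.1)).exists
  have hab : a ≤ b := by
    by_contra hc
    push_neg at hc
    exact absurd (cdf_strictMono hc) (by linarith)
  have hcont : Continuous stdNormalCDF :=
    continuous_iff_continuousAt.2 fun x => (cdf_hasDerivAt x).differentiableAt.continuousAt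
  have := intermediate_value_Icc hab hcont.continuousOn
  have hy' : y ∈ Icc (stdNormalCDF a) (stdNormalCDF b) := ⟨ha.le, hb.le⟩
  obtain ⟨x, _, hx⟩ := this hy'
  exact ⟨x, hx⟩

lemma inv_monotoneOn : MonotoneOn stdNormalCDFInv (Ioo (0:ℝ) 1) := by
  intro y1 h1 y2 h2 h12
  have e1 : stdNormalCDF (stdNormalCDFInv y1) = y1 := Function.invFun_eq (cdf_surjOn h1)
  have e2 : stdNormalCDF (stdNormalCDFInv y2) = y2 := Function.invFun_eq (cdf_surjOn h2)
  exact cdf_strictMono.le_iff_le.1 (by rw [e1, e2]; exact h12)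

lemma inv_aemeasurable {u : ℝ} (hu : u ∈ Ioo (0:ℝ) 1) :
    AEMeasurable stdNormalCDFInv (volume.restrict (Set.uIoc (0:ℝ) u)) := by
  have hsub : Set.uIoc (0:ℝ) u ⊆ Ioo (0:ℝ) 1 := by
    rw [Set.uIoc_of_le hu.1.le]
    exact fun x hx => ⟨hx.1, lt_of_le_of_lt hx.2 hu.2⟩
  exact aemeasurable_restrict_of_monotoneOn measurableSet_uIoc (inv_monotoneOn.mono hsub)

lemma inner_hasDerivAt {s x a b : ℝ} (hs : 0 < s) (hxs : s < x) :
    HasDerivAt (fun τ => stdNormalCDF ((Real.sqrt τ * a - Real.sqrt s * b) / Real.sqrt (τ - s)))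
      (stdNormalPDF ((Real.sqrt x * a - Real.sqrt s * b) / Real.sqrt (x - s)) *
        (a / (2 * Real.sqrt (x * (x - s))) -
          (Real.sqrt x * a - Real.sqrt s * b) / (2 * Real.sqrt (x - s) ^ 3))) x := by
  have hx : 0 < x := hs.trans hxs
  have hd : 0 < x - s := sub_pos.2 hxs
  have hcx : 0 < Real.sqrt x := Real.sqrt_pos.2 hx
  have hcd : 0 < Real.sqrt (x - s) := Real.sqrt_pos.2 hd
  have h1 : HasDerivAt (fun τ : ℝ => Real.sqrt τ) (1 / (2 * Real.sqrt x)) x :=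
    Real.hasDerivAt_sqrt hx.ne'
  have h2 : HasDerivAt (fun τ : ℝ => Real.sqrt (τ - s)) (1 / (2 * Real.sqrt (x - s))) x := by
    have := (Real.hasDerivAt_sqrt hd.ne').comp x ((hasDerivAt_id x).sub_const s)
    simpa [Function.comp_def] using this
  have h3 : HasDerivAt (fun τ : ℝ => (Real.sqrt (τ - s))⁻¹)
      (-(1 / (2 * Real.sqrt (x - s))) / (Real.sqrt (x - s)) ^ 2) x := h2.inv hcd.ne'
  have hnum : HasDerivAt (fun τ : ℝ => Real.sqrt τ * a - Real.sqrt s * b)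
      (1 / (2 * Real.sqrt x) * a) x := (h1.mul_const a).sub_const _
  have hq : HasDerivAt (fun τ : ℝ => (Real.sqrt τ * a - Real.sqrt s * b) * (Real.sqrt (τ - s))⁻¹)
      (1 / (2 * Real.sqrt x) * a * (Real.sqrt (x - s))⁻¹ +
        (Real.sqrt x * a - Real.sqrt s * b) *
          (-(1 / (2 * Real.sqrt (x - s))) / (Real.sqrt (x - s)) ^ 2)) x := hnum.mul h3
  have hchain := (cdf_hasDerivAt ((Real.sqrt x * a - Real.sqrt s * b) * (Real.sqrt (x - s))⁻¹)).comp x hq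
  have hqx : (Real.sqrt x * a - Real.sqrt s * b) * (Real.sqrt (x - s))⁻¹ =
      (Real.sqrt x * a - Real.sqrt s * b) / Real.sqrt (x - s) := by rw [div_eq_mul_inv]
  simp only [div_eq_mul_inv] at *
  refine hchain.congr_deriv (Eq.symm ?_)
  have hmul : Real.sqrt (x * (x - s)) = Real.sqrt x * Real.sqrt (x - s) := Real.sqrt_mul hx.le _
  rw [hmul]
  have hd2 : Real.sqrt (x - s) ^ 2 = x - s := Real.sq_sqrt hd.le
  field_simp
  ring

lemma cdf_cont : Continuous stdNormalCDF :=
  continuous_iff_continuousAt.2 fun x => (cdf_hasDerivAt x).differentiableAt.continuousAt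

/-- For u, v ∈ (0,1) and 0 < s < t, the partial derivative of ψ(s,t;u,v) with respect
to t exists and is given by the stated integral formula. -/
theorem psi_hasDerivAt_t (u v s t : ℝ) (hu : u ∈ Set.Ioo (0:ℝ) 1) (hv : v ∈ Set.Ioo (0:ℝ) 1)
    (hs : 0 < s) (hst : s < t) :
    HasDerivAt (fun τ : ℝ => psi s τ u v)
      (∫ w in (0:ℝ)..u,
        stdNormalPDF ((Real.sqrt t * stdNormalCDFInv v - Real.sqrt s * stdNormalCDFInv w) /
            Real.sqrt (t - s)) *
          (stdNormalCDFInv v / (2 * Real.sqrt (t * (t - s))) -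
            (Real.sqrt t * stdNormalCDFInv v - Real.sqrt s * stdNormalCDFInv w) /
              (2 * Real.sqrt (t - s) ^ 3))) t := by
  set a := stdNormalCDFInv v with ha
  have hv0 : ¬ v ≤ 0 := not_le.2 hv.1
  have hv1 : ¬ 1 ≤ v := not_le.2 hv.2
  set F' : ℝ → ℝ → ℝ := fun x w =>
    stdNormalPDF ((Real.sqrt x * a - Real.sqrt s * stdNormalCDFInv w) / Real.sqrt (x - s)) *
      (a / (2 * Real.sqrt (x * (x - s))) -
        (Real.sqrt x * a - Real.sqrt s * stdNormalCDFInv w) / (2 * Real.sqrt (x - s) ^ 3))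
    with hF'
  set ε : ℝ := (t - s) / 2 with hε
  have hεpos : 0 < ε := by simp [hε]; linarith
  have hball : ∀ x ∈ Metric.ball t ε, s < x ∧ (t - s) / 2 < x - s := by
    intro x hx
    rw [Metric.mem_ball, Real.dist_eq, abs_lt] at hx
    constructor <;> [linarith; linarith]
  -- measurability of F x for each x
  have hFmeas : ∀ x : ℝ, AEStronglyMeasurable (fun w => psiIntegrand s x v w)
      (volume.restrict (Set.uIoc (0:ℝ) u)) := by
    intro x
    have heq : (fun w => psiIntegrand s x v w) =
        (fun r => stdNormalCDF ((Real.sqrt (max s x) * a - Real.sqrt (min s x) * r) /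
          Real.sqrt |x - s|)) ∘ stdNormalCDFInv := by
      funext w
      simp only [psiIntegrand, if_neg hv0, if_neg hv1, Function.comp, ← ha]
    rw [heq]
    exact ((cdf_cont.comp (by continuity)).measurable.comp_aemeasurable
      (inv_aemeasurable hu)).aestronglyMeasurable
  have hF'meas : AEStronglyMeasurable (F' t) (volume.restrict (Set.uIoc (0:ℝ) u)) := by
    have heq : F' t = (fun r =>
        stdNormalPDF ((Real.sqrt t * a - Real.sqrt s * r) / Real.sqrt (t - s)) *
          (a / (2 * Real.sqrt (t * (t - s))) -
            (Real.sqrt t * a - Real.sqrt s * r) / (2 * Real.sqrt (t - s) ^ 3))) ∘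
        stdNormalCDFInv := by funext w; simp [hF', Function.comp]
    rw [heq]
    exact (((pdf_cont.comp (by continuity)).mul (by continuity)).measurable.comp_aemeasurable
      (inv_aemeasurable hu)).aestronglyMeasurable
  -- integrability of F t
  have hFint : IntervalIntegrable (fun w => psiIntegrand s t v w) volume 0 u := by
    rw [intervalIntegrable_iff]
    have hfin : volume (Set.uIoc (0:ℝ) u) < ⊤ := by
      rw [Set.uIoc]; exact measure_Ioc_lt_top
    refine Integrable.mono' ((integrableOn_const_iff (C := (1:ℝ))).2 (Or.inr hfin)) (hFmeas t) ?_
    refine Filter.Eventually.of_forall fun w => ?_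
    simp only [psiIntegrand, if_neg hv0, if_neg hv1, Real.norm_eq_abs]
    rw [abs_of_nonneg (cdf_nonneg _)]
    exact cdf_le_one _
  -- the dominating bound
  set B : ℝ := |a| / (2 * Real.sqrt (s * ((t - s) / 2))) + 1 / (t - s) with hB
  have h_bound : ∀ᵐ w ∂(volume : Measure ℝ), w ∈ Set.uIoc (0:ℝ) u →
      ∀ x ∈ Metric.ball t ε, ‖F' x w‖ ≤ B := by
    refine Filter.Eventually.of_forall fun w _ x hx => ?_
    obtain ⟨hsx, hdx⟩ := hball x hx
    have hx0 : 0 < x := hs.trans hsx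
    have hd0 : 0 < x - s := sub_pos.2 hsx
    set b := stdNormalCDFInv w with hb
    set hh : ℝ := (Real.sqrt x * a - Real.sqrt s * b) / Real.sqrt (x - s) with hhh
    have hcd : 0 < Real.sqrt (x - s) := Real.sqrt_pos.2 hd0
    have key : (Real.sqrt x * a - Real.sqrt s * b) / (2 * Real.sqrt (x - s) ^ 3) =
        hh / (2 * (x - s)) := by
      rw [hhh]
      rw [div_div]
      congr 1
      rw [show Real.sqrt (x - s) ^ 3 = Real.sqrt (x - s) * Real.sqrt (x - s) ^ 2 by ring,
        Real.sq_sqrt hd0.le]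
      ring
    have hexp : F' x w = stdNormalPDF hh * (a / (2 * Real.sqrt (x * (x - s)))) -
        (stdNormalPDF hh * hh) / (2 * (x - s)) := by
      simp only [hF', ← hb, key, hhh]
      ring
    rw [hexp, Real.norm_eq_abs]
    have h1 : |stdNormalPDF hh * (a / (2 * Real.sqrt (x * (x - s))))| ≤
        |a| / (2 * Real.sqrt (s * ((t - s) / 2))) := by
      rw [abs_mul]
      have hsz : 0 < Real.sqrt (s * ((t - s) / 2)) := Real.sqrt_pos.2 (by positivity)
      have hle : Real.sqrt (s * ((t - s) / 2)) ≤ Real.sqrt (x * (x - s)) :=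
        Real.sqrt_le_sqrt (by nlinarith)
      have h2 : |a / (2 * Real.sqrt (x * (x - s)))| ≤ |a| / (2 * Real.sqrt (s * ((t - s) / 2))) := by
        rw [abs_div, abs_of_nonneg (by positivity : (0:ℝ) ≤ 2 * Real.sqrt (x * (x - s)))]
        gcongr
      calc |stdNormalPDF hh| * |a / (2 * Real.sqrt (x * (x - s)))|
          ≤ 1 * |a / (2 * Real.sqrt (x * (x - s)))| := by
            apply mul_le_mul_of_nonneg_right _ (abs_nonneg _)
            rw [abs_of_nonneg (pdf_pos hh).le]; exact pdf_le_one hh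
        _ ≤ |a| / (2 * Real.sqrt (s * ((t - s) / 2))) := by rw [one_mul]; exact h2
    have h3 : |stdNormalPDF hh * hh / (2 * (x - s))| ≤ 1 / (t - s) := by
      rw [abs_div, abs_of_nonneg (by positivity : (0:ℝ) ≤ 2 * (x - s))]
      calc |stdNormalPDF hh * hh| / (2 * (x - s)) ≤ 1 / (2 * (x - s)) := by
            gcongr
            exact pdf_mul_le_one hh
        _ ≤ 1 / (t - s) := by
            apply one_div_le_one_div_of_le (by linarith) (by linarith)
    calc |stdNormalPDF hh * (a / (2 * Real.sqrt (x * (x - s)))) -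
          stdNormalPDF hh * hh / (2 * (x - s))|
        ≤ |stdNormalPDF hh * (a / (2 * Real.sqrt (x * (x - s))))| +
          |stdNormalPDF hh * hh / (2 * (x - s))| := abs_sub _ _
      _ ≤ B := by rw [hB]; exact add_le_add h1 h3
  have h_diff : ∀ᵐ w ∂(volume : Measure ℝ), w ∈ Set.uIoc (0:ℝ) u →
      ∀ x ∈ Metric.ball t ε, HasDerivAt (fun τ => psiIntegrand s τ v w) (F' x w) x := by
    refine Filter.Eventually.of_forall fun w _ x hx => ?_
    obtain ⟨hsx, _⟩ := hball x hx
    have hG := inner_hasDerivAt (a := a) (b := stdNormalCDFInv w) hs hsx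
    refine hG.congr_of_eventuallyEq ?_
    have hopen : ∀ᶠ τ in 𝓝 x, s < τ := eventually_gt_nhds hsx
    filter_upwards [hopen] with τ hτ
    simp only [psiIntegrand, if_neg hv0, if_neg hv1,
      max_eq_right hτ.le, min_eq_left hτ.le, abs_of_pos (sub_pos.2 hτ), ← ha]
  have main := intervalIntegral.hasDerivAt_integral_of_dominated_loc_of_deriv_le
    (F := fun x w => psiIntegrand s x v w) (F' := F') (a := 0) (b := u) (x₀ := t)
    (μ := volume) (bound := fun _ => B) (Metric.ball_mem_nhds t hεpos)
    (Filter.Eventually.of_forall hFmeas) hFint hF'meas h_bound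
    intervalIntegrable_const h_diff
  refine main.2.congr_of_eventuallyEq ?_
  have hne : ∀ᶠ τ in 𝓝 t, τ ≠ s := eventually_ne_nhds (by linarith)
  filter_upwards [hne] with τ hτ
  simp only [psi, if_pos (abs_pos.2 (sub_ne_zero.2 hτ))]
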